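/- Let b, s be positive integers with b ≤ 2^s, and let (a_j : b ≤ j ≤ 2^s) be a finite sequence of complex numbers. Then the 2-variation satisfies V²(a_j : b ≤ j ≤ 2^s) ≤ √2 · ∑_{i=0}^{s} ( ∑_{j : [j2^i,(j+1)2^i) ⊆ [b,2^s]} |a_{(j+1)2^i} - a_{j2^i}|² )^{1/2} (the Rademacher–Menshov inequality). -/

import Mathlib

open scoped ENNReal

/-- Dyadic decomposition: for `m < n ≤ 2^s`, `a n - a m` is a sum of dyadic differences,
at most 2 per scale `i ≤ s`. -/
lemma dyadic_decomp : ∀ (s : ℕ) (a : ℕ → ℂ) (m n : ℕ), m < n → n ≤ 2 ^ s →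
    ∃ S : ℕ → Finset ℕ,
      (∀ i, (S i).card ≤ 2) ∧
      (∀ i j, j ∈ S i → m ≤ j * 2 ^ i ∧ (j + 1) * 2 ^ i ≤ n) ∧
      a n - a m = ∑ i ∈ Finset.range (s + 1), ∑ j ∈ S i,
        (a ((j + 1) * 2 ^ i) - a (j * 2 ^ i)) := by
  intro s
  induction s with
  | zero =>
    intro a m n hmn hn
    have hm0 : m = 0 := by omega
    have hn1 : n = 1 := by omega
    subst hm0; subst hn1
    refine ⟨fun i => Nat.rec {0} (fun _ _ => ∅) i, ?_, ?_, ?_⟩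
    · intro i; rcases i with _ | i <;> simp
    · intro i j hj
      rcases i with _ | i
      · simp at hj; subst hj; simp
      · simp at hj
    · simp
  | succ s ih =>
    intro a m n hmn hn
    set m₂ := m + m % 2 with hm₂
    set n₂ := n - n % 2 with hn₂
    set B : Finset ℕ := (if m % 2 = 1 then ({m} : Finset ℕ) else ∅) ∪
      (if n % 2 = 1 then ({n - 1} : Finset ℕ) else ∅) with hB
    have hBcard : B.card ≤ 2 := by
      refine (Finset.card_union_le _ _).trans ?_
      have h1 : (if m % 2 = 1 then ({m} : Finset ℕ) else ∅).card ≤ 1 := by split <;> simp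
      have h2 : (if n % 2 = 1 then ({n - 1} : Finset ℕ) else ∅).card ≤ 1 := by split <;> simp
      omega
    have hBmem : ∀ j ∈ B, (j = m ∧ m % 2 = 1) ∨ (j = n - 1 ∧ n % 2 = 1) := by
      intro j hj
      rw [hB, Finset.mem_union] at hj
      rcases hj with hj | hj <;> [left; right] <;>
        · split at hj <;> simp_all
    have hBsum : ∑ j ∈ B, (a (j + 1) - a j) = (a m₂ - a m) + (a n - a n₂) := by
      rw [hB]
      rcases Nat.mod_two_eq_zero_or_one m with hm | hm <;>
        rcases Nat.mod_two_eq_zero_or_one n with hnn | hnn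
      · have h1 : m₂ = m := by omega
        have h2 : n₂ = n := by omega
        rw [h1, h2, if_neg (by omega), if_neg (by omega)]
        simp
      · have h1 : m₂ = m := by omega
        have h2 : n - 1 + 1 = n := by omega
        have h3 : n₂ = n - 1 := by omega
        rw [h1, h3, if_neg (by omega), if_pos hnn, Finset.empty_union,
          Finset.sum_singleton, h2]
        ring
      · have h1 : m₂ = m + 1 := by omega
        have h2 : n₂ = n := by omega
        rw [h1, h2, if_pos hm, if_neg (by omega), Finset.union_empty,
          Finset.sum_singleton]
        ring
      · have hne : (m : ℕ) ∉ ({n - 1} : Finset ℕ) := by simp; omega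
        have h1 : m₂ = m + 1 := by omega
        have h2 : n - 1 + 1 = n := by omega
        have h3 : n₂ = n - 1 := by omega
        rw [h1, h3, if_pos hm, if_pos hnn,
          Finset.sum_union (Finset.disjoint_singleton_left.2 hne),
          Finset.sum_singleton, Finset.sum_singleton, h2]
    by_cases hmn₂ : m₂ = n₂
    · refine ⟨fun i => Nat.rec B (fun _ _ => ∅) i, ?_, ?_, ?_⟩
      · intro i; rcases i with _ | i
        · exact hBcard
        · simp
      · intro i j hj
        rcases i with _ | i
        · rcases hBmem j hj with ⟨rfl, _⟩ | ⟨rfl, _⟩ <;> simp <;> omega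
        · simp at hj
      · rw [Finset.sum_range_succ']
        simp only [Nat.rec_add_one, Nat.rec_zero, Finset.sum_empty,
          Finset.sum_const_zero, zero_add, pow_zero, mul_one]
        rw [hBsum, hmn₂]; ring
    · have hle : m₂ ≤ n₂ := by omega
      have hlt : m₂ < n₂ := lt_of_le_of_ne hle hmn₂
      set m' := m₂ / 2 with hm'
      set n' := n₂ / 2 with hn'
      have hm'2 : m₂ = 2 * m' := by omega
      have hn'2 : n₂ = 2 * n' := by omega
      have hmn' : m' < n' := by omega
      have hn's : n' ≤ 2 ^ s := by
        have : 2 ^ (s + 1) = 2 * 2 ^ s := by ring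
        omega
      obtain ⟨S', hc', hmem', hsum'⟩ := ih (fun j => a (2 * j)) m' n' hmn' hn's
      refine ⟨fun i => Nat.rec B (fun i _ => S' i) i, ?_, ?_, ?_⟩
      · intro i; rcases i with _ | i
        · exact hBcard
        · exact hc' i
      · intro i j hj
        rcases i with _ | i
        · rcases hBmem j hj with ⟨rfl, _⟩ | ⟨rfl, _⟩ <;> simp <;> omega
        · obtain ⟨h1, h2⟩ := hmem' i j hj
          constructor
          · calc m ≤ m₂ := by omega
              _ = 2 * m' := hm'2
              _ ≤ 2 * (j * 2 ^ i) := by omega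
              _ = j * 2 ^ (i + 1) := by ring
          · calc (j + 1) * 2 ^ (i + 1) = 2 * ((j + 1) * 2 ^ i) := by ring
              _ ≤ 2 * n' := by omega
              _ = n₂ := hn'2.symm
              _ ≤ n := by omega
      · rw [Finset.sum_range_succ']
        simp only [Nat.rec_add_one, Nat.rec_zero, pow_zero, mul_one]
        have e1 : ∑ i ∈ Finset.range (s + 1), ∑ j ∈ S' i,
            (a ((j + 1) * 2 ^ (i + 1)) - a (j * 2 ^ (i + 1))) = a n₂ - a m₂ := by
          rw [hm'2, hn'2, hsum']
          refine Finset.sum_congr rfl fun i _ => Finset.sum_congr rfl fun j _ => ?_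
          congr 2 <;> ring
        rw [e1, hBsum]; ring

/-- Minkowski inequality for finitely many summands, `ℝ≥0∞` version. -/
lemma lp_sum_le {ι κ : Type*} (T : Finset ι) (U : Finset κ) (x : ι → κ → ℝ≥0∞) :
    (∑ k ∈ U, (∑ i ∈ T, x i k) ^ (2 : ℝ)) ^ (1 / 2 : ℝ) ≤
      ∑ i ∈ T, (∑ k ∈ U, x i k ^ (2 : ℝ)) ^ (1 / 2 : ℝ) := by
  induction T using Finset.cons_induction with
  | empty =>
    simp only [Finset.sum_empty]
    rw [ENNReal.zero_rpow_of_pos (by norm_num)]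
    simp [ENNReal.zero_rpow_of_pos]
  | cons i T hi ih =>
    simp only [Finset.sum_cons]
    calc (∑ k ∈ U, (x i k + ∑ i' ∈ T, x i' k) ^ (2 : ℝ)) ^ (1 / 2 : ℝ)
        ≤ (∑ k ∈ U, x i k ^ (2 : ℝ)) ^ (1 / 2 : ℝ) +
          (∑ k ∈ U, (∑ i' ∈ T, x i' k) ^ (2 : ℝ)) ^ (1 / 2 : ℝ) :=
          ENNReal.Lp_add_le U _ _ (by norm_num)
      _ ≤ _ := add_le_add_right ih _

/-- Cauchy–Schwarz with at most two terms, `ℝ≥0∞` version. -/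
lemma sq_sum_le_two_mul {T : Finset ℕ} (hT : T.card ≤ 2) (r : ℕ → ℝ) (hr : ∀ j, 0 ≤ r j) :
    (∑ j ∈ T, ENNReal.ofReal (r j)) ^ (2 : ℝ) ≤
      2 * ∑ j ∈ T, ENNReal.ofReal (r j) ^ (2 : ℝ) := by
  have hsum : (0 : ℝ) ≤ ∑ j ∈ T, r j := Finset.sum_nonneg fun j _ => hr j
  have hreal : (∑ j ∈ T, r j) ^ 2 ≤ 2 * ∑ j ∈ T, r j ^ 2 := by
    have h1 : (∑ j ∈ T, r j) ^ 2 ≤ (T.card : ℝ) * ∑ j ∈ T, r j ^ 2 :=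
      sq_sum_le_card_mul_sum_sq
    have h2 : (T.card : ℝ) ≤ 2 := by exact_mod_cast hT
    have h3 : (0 : ℝ) ≤ ∑ j ∈ T, r j ^ 2 := Finset.sum_nonneg fun j _ => sq_nonneg _
    nlinarith
  calc (∑ j ∈ T, ENNReal.ofReal (r j)) ^ (2 : ℝ)
      = ENNReal.ofReal (∑ j ∈ T, r j) ^ (2 : ℝ) := by
        rw [ENNReal.ofReal_sum_of_nonneg fun j _ => hr j]
    _ = ENNReal.ofReal ((∑ j ∈ T, r j) ^ 2) := by
        rw [ENNReal.ofReal_rpow_of_nonneg hsum (by norm_num : (0:ℝ) ≤ 2), Real.rpow_two]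
    _ ≤ ENNReal.ofReal (2 * ∑ j ∈ T, r j ^ 2) := ENNReal.ofReal_le_ofReal hreal
    _ = 2 * ∑ j ∈ T, ENNReal.ofReal (r j) ^ (2 : ℝ) := by
        rw [ENNReal.ofReal_mul (by norm_num), ENNReal.ofReal_ofNat,
          ENNReal.ofReal_sum_of_nonneg fun j _ => sq_nonneg _]
        congr 1
        refine Finset.sum_congr rfl fun j _ => ?_
        rw [ENNReal.ofReal_rpow_of_nonneg (hr j) (by norm_num : (0:ℝ) ≤ 2),
          Real.rpow_two]

/-- The `2`-variation seminorm of a sequence `a` over the integer interval `[b, c]`. -/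
noncomputable def eVar2Nat (a : ℕ → ℂ) (b c : ℕ) : ℝ≥0∞ :=
  ⨆ (K : ℕ) (t : Fin (K + 1) → ℕ) (_ : StrictMono t) (_ : ∀ i, t i ∈ Set.Icc b c),
    (∑ i : Fin K, ENNReal.ofReal ‖a (t i.succ) - a (t i.castSucc)‖ ^ (2 : ℝ)) ^ (1 / 2 : ℝ)

/-- Rademacher–Menshov: for positive integers `b ≤ 2^s`,
`V²(a_j : b ≤ j ≤ 2^s) ≤ √2 · ∑_{i=0}^{s} (∑_{[j2^i,(j+1)2^i) ⊆ [b,2^s]}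
|a_{(j+1)2^i} - a_{j2^i}|²)^{1/2}`. -/
theorem rademacher_menshov (b s : ℕ) (hb : 0 < b) (hs : 0 < s) (hbs : b ≤ 2 ^ s)
    (a : ℕ → ℂ) :
    eVar2Nat a b (2 ^ s) ≤
      ENNReal.ofReal (Real.sqrt 2) *
        ∑ i ∈ Finset.range (s + 1),
          (∑ j ∈ (Finset.range (2 ^ s)).filter
              (fun j => b ≤ j * 2 ^ i ∧ (j + 1) * 2 ^ i ≤ 2 ^ s),
            ENNReal.ofReal ‖a ((j + 1) * 2 ^ i) - a (j * 2 ^ i)‖ ^ (2 : ℝ)) ^ (1 / 2 : ℝ) := by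
  rw [eVar2Nat]
  refine iSup_le fun K => iSup_le fun t => iSup_le fun ht => iSup_le fun htmem => ?_
  set F : ℕ → ℕ → ℝ≥0∞ :=
    fun i j => ENNReal.ofReal ‖a ((j + 1) * 2 ^ i) - a (j * 2 ^ i)‖ with hF
  set Big : ℕ → ℝ≥0∞ := fun i => ∑ j ∈ (Finset.range (2 ^ s)).filter
      (fun j => b ≤ j * 2 ^ i ∧ (j + 1) * 2 ^ i ≤ 2 ^ s), F i j ^ (2 : ℝ) with hBig
  -- decomposition per jump
  have key : ∀ k : Fin K, ∃ S : ℕ → Finset ℕ, (∀ i, (S i).card ≤ 2) ∧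
      (∀ i j, j ∈ S i → t k.castSucc ≤ j * 2 ^ i ∧ (j + 1) * 2 ^ i ≤ t k.succ) ∧
      a (t k.succ) - a (t k.castSucc) = ∑ i ∈ Finset.range (s + 1), ∑ j ∈ S i,
        (a ((j + 1) * 2 ^ i) - a (j * 2 ^ i)) :=
    fun k => dyadic_decomp s a _ _ (ht (Fin.castSucc_lt_succ (i := k))) ((htmem k.succ).2)
  choose S hScard hSmem hSsum using key
  set x : ℕ → Fin K → ℝ≥0∞ := fun i k => ∑ j ∈ S k i, F i j with hx
  -- step 1: pointwise bound for each jump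
  have step1 : ∀ k : Fin K, ENNReal.ofReal ‖a (t k.succ) - a (t k.castSucc)‖ ≤
      ∑ i ∈ Finset.range (s + 1), x i k := by
    intro k
    rw [hSsum k]
    calc ENNReal.ofReal ‖∑ i ∈ Finset.range (s + 1), ∑ j ∈ S k i,
          (a ((j + 1) * 2 ^ i) - a (j * 2 ^ i))‖
        ≤ ENNReal.ofReal (∑ i ∈ Finset.range (s + 1), ∑ j ∈ S k i,
            ‖a ((j + 1) * 2 ^ i) - a (j * 2 ^ i)‖) := by
          apply ENNReal.ofReal_le_ofReal
          refine (norm_sum_le _ _).trans (Finset.sum_le_sum fun i _ => norm_sum_le _ _)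
      _ = ∑ i ∈ Finset.range (s + 1), x i k := by
          rw [ENNReal.ofReal_sum_of_nonneg fun i _ =>
            Finset.sum_nonneg fun j _ => norm_nonneg _]
          exact Finset.sum_congr rfl fun i _ =>
            ENNReal.ofReal_sum_of_nonneg fun j _ => norm_nonneg _
  -- disjointness of the dyadic families across jumps
  have hdd : ∀ i (k k' : Fin K), k < k' → Disjoint (S k i) (S k' i) := by
    intro i k k' hkk
    rw [Finset.disjoint_left]
    intro j hj hj'
    have h1 := (hSmem k i j hj).2
    have h2 := (hSmem k' i j hj').1
    have hle : (k.succ : Fin (K + 1)) ≤ k'.castSucc := by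
      rw [Fin.le_def]
      simp only [Fin.val_succ, Fin.coe_castSucc]
      exact hkk
    have h3 : t k.succ ≤ t k'.castSucc := ht.monotone hle
    have h4 : (j + 1) * 2 ^ i ≤ j * 2 ^ i := h1.trans (h3.trans h2)
    have h5 : j * 2 ^ i < (j + 1) * 2 ^ i :=
      (Nat.mul_lt_mul_right (Nat.two_pow_pos i)).2 (Nat.lt_succ_self j)
    omega
  have hpd : ∀ i, (↑(Finset.univ : Finset (Fin K)) : Set (Fin K)).PairwiseDisjoint
      (fun k => S k i) := by
    intro i k _ k' _ hne
    rcases lt_or_gt_of_ne hne with h | h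
    · exact hdd i k k' h
    · exact (hdd i k' k h).symm
  -- step 4 : per-scale sum bounded by the full dyadic sum
  have step4 : ∀ i, (∑ k : Fin K, ∑ j ∈ S k i, F i j ^ (2 : ℝ)) ≤ Big i := by
    intro i
    rw [← Finset.sum_biUnion (hpd i)]
    apply Finset.sum_le_sum_of_subset
    intro j hj
    simp only [Finset.mem_biUnion] at hj
    obtain ⟨k, _, hjk⟩ := hj
    obtain ⟨h1, h2⟩ := hSmem k i j hjk
    have hb1 : b ≤ t k.castSucc := (htmem _).1
    have hb2 : t k.succ ≤ 2 ^ s := (htmem _).2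
    simp only [Finset.mem_filter, Finset.mem_range]
    have hp : 0 < 2 ^ i := Nat.two_pow_pos i
    refine ⟨?_, hb1.trans h1, h2.trans hb2⟩
    calc j ≤ j * 2 ^ i := Nat.le_mul_of_pos_right j hp
      _ < (j + 1) * 2 ^ i := (Nat.mul_lt_mul_right hp).2 (Nat.lt_succ_self j)
      _ ≤ 2 ^ s := h2.trans hb2
  -- step 3 : square of at-most-two sums
  have step3 : ∀ i (k : Fin K), x i k ^ (2 : ℝ) ≤ 2 * ∑ j ∈ S k i, F i j ^ (2 : ℝ) := by
    intro i k
    exact sq_sum_le_two_mul (hScard k i) _ fun j => norm_nonneg _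
  -- assemble
  have hhalf : (0 : ℝ) ≤ 1 / 2 := by norm_num
  calc (∑ k : Fin K, ENNReal.ofReal ‖a (t k.succ) - a (t k.castSucc)‖ ^ (2 : ℝ)) ^ (1 / 2 : ℝ)
      ≤ (∑ k : Fin K, (∑ i ∈ Finset.range (s + 1), x i k) ^ (2 : ℝ)) ^ (1 / 2 : ℝ) := by
        refine ENNReal.rpow_le_rpow (Finset.sum_le_sum fun k _ => ?_) hhalf
        exact ENNReal.rpow_le_rpow (step1 k) (by norm_num)
    _ ≤ ∑ i ∈ Finset.range (s + 1), (∑ k : Fin K, x i k ^ (2 : ℝ)) ^ (1 / 2 : ℝ) :=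
        lp_sum_le _ _ _
    _ ≤ ∑ i ∈ Finset.range (s + 1), (2 * Big i) ^ (1 / 2 : ℝ) := by
        refine Finset.sum_le_sum fun i _ => ENNReal.rpow_le_rpow ?_ hhalf
        calc ∑ k : Fin K, x i k ^ (2 : ℝ)
            ≤ ∑ k : Fin K, 2 * ∑ j ∈ S k i, F i j ^ (2 : ℝ) :=
              Finset.sum_le_sum fun k _ => step3 i k
          _ = 2 * ∑ k : Fin K, ∑ j ∈ S k i, F i j ^ (2 : ℝ) := by
              rw [Finset.mul_sum]
          _ ≤ 2 * Big i := mul_le_mul_right (step4 i) 2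
    _ = ENNReal.ofReal (Real.sqrt 2) * ∑ i ∈ Finset.range (s + 1), Big i ^ (1 / 2 : ℝ) := by
        rw [Finset.mul_sum]
        refine Finset.sum_congr rfl fun i _ => ?_
        rw [ENNReal.mul_rpow_of_nonneg _ _ hhalf]
        congr 1
        rw [Real.sqrt_eq_rpow, ← ENNReal.ofReal_rpow_of_pos (by norm_num),
          ENNReal.ofReal_ofNat]
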